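/- The number of different increasing bilabellings of a rooted tree T of size n with distinguishable nodes (i.e., assignments of the labels {1,...,2n} into disjoint 2-element sets, one per node, such that every label of a child node exceeds every label of its parent) equals (2n)! divided by the product over all vertices v of T of 2h_v(2h_v - 1), where h_v is the number of descendants of v including v itself. -/

import Mathlib

lemma nat_card_sigma {ι : Type} [Fintype ι] (f : ι → Type) [∀ i, Finite (f i)] :
    Nat.card (Σ i, f i) = ∑ i, Nat.card (f i) := by
  classical
  letI : ∀ i, Fintype (f i) := fun i => Fintype.ofFinite _
  simp [Nat.card_eq_fintype_card, Fintype.card_sigma]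

namespace Bilab

def desc {V : Type} (p : V → V) (v : V) : Set V := {u | ∃ k, p^[k] u = v}

lemma self_mem_desc {V : Type} (p : V → V) (v : V) : v ∈ desc p v := ⟨0, rfl⟩

variable {V : Type}

/-- parent function on the complement of a root `t`. -/
noncomputable def pres (p : V → V) (t : V) : {u : V // u ≠ t} → {u : V // u ≠ t} :=
  fun u =>
    letI : Decidable (p u.1 = t) := Classical.dec _
    if h : p u.1 = t then u else ⟨p u.1, h⟩

lemma pres_iter_val (p : V → V) (t : V) (k : ℕ) : ∀ (u : {u : V // u ≠ t}),
    (∀ j ≤ k, p^[j] u.1 ≠ t) → ((pres p t)^[k] u).1 = p^[k] u.1 := by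
  induction k with
  | zero => intro u _; rfl
  | succ k ih =>
    intro u hu
    have h1 : p u.1 ≠ t := hu 1 (by omega)
    have : pres p t u = ⟨p u.1, h1⟩ := dif_neg h1
    rw [Function.iterate_succ_apply, this, ih ⟨p u.1, h1⟩ (fun j hj => by
      simpa [Function.iterate_succ_apply] using hu (j+1) (by omega)),
      ← Function.iterate_succ_apply]

lemma no_t_in_orbit (p : V → V) (t : V) (ht : p t = t) {u v : V} {k : ℕ} (hk : p^[k] u = v) (hv : v ≠ t) :
    ∀ j ≤ k, p^[j] u ≠ t := by
  intro j hj habs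
  apply hv
  have : p^[k] u = p^[k - j] (p^[j] u) := by
    rw [← Function.iterate_add_apply]; congr 1; omega
  rw [hk, habs, Function.iterate_fixed ht] at this
  exact this

lemma desc_pres (p : V → V) (t : V) (ht : p t = t) (v : {u : V // u ≠ t}) :
    Subtype.val '' desc (pres p t) v = desc p v.1 := by
  ext u
  constructor
  · rintro ⟨u', ⟨k, hk⟩, rfl⟩
    induction k generalizing u' with
    | zero => exact hk ▸ self_mem_desc p v.1
    | succ k ih =>
      rw [Function.iterate_succ_apply] at hk
      have h2 := ih (pres p t u') hk
      by_cases h : p u'.1 = t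
      · rwa [show pres p t u' = u' from dif_pos h] at h2
      · rw [show pres p t u' = ⟨p u'.1, h⟩ from dif_neg h] at h2
        obtain ⟨m, hm⟩ := h2
        exact ⟨m + 1, by rwa [Function.iterate_add_apply, Function.iterate_one]⟩
  · rintro ⟨k, hk⟩
    have hu : u ≠ t := by
      rintro rfl
      exact v.2 ((Function.iterate_fixed ht k ▸ hk).symm)
    refine ⟨⟨u, hu⟩, ⟨k, ?_⟩, rfl⟩
    exact Subtype.ext (by rw [pres_iter_val p t k ⟨u, hu⟩ (no_t_in_orbit p t ht hk v.2)]; exact hk)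

lemma pres_forest (p : V → V) (t : V) (ht : p t = t) (hp : ∀ v : V, ∃ k : ℕ, p (p^[k] v) = p^[k] v) :
    ∀ u : {u : V // u ≠ t}, ∃ k : ℕ, (pres p t) ((pres p t)^[k] u) = (pres p t)^[k] u := by
  classical
  intro u
  by_cases hex : ∃ j, p^[j] u.1 = t
  · set k := Nat.find hex with hkdef
    have hk : p^[k] u.1 = t := Nat.find_spec hex
    have hk1 : 1 ≤ k := by
      rcases Nat.eq_zero_or_pos k with h0 | h1
      · exact absurd (by simpa [h0] using hk) u.2
      · exact h1
    have hlt : ∀ j < k, p^[j] u.1 ≠ t := fun j hj => Nat.find_min hex hj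
    refine ⟨k - 1, ?_⟩
    have hval : ((pres p t)^[k-1] u).1 = p^[k-1] u.1 :=
      pres_iter_val p t (k-1) u (fun j hj => hlt j (by omega))
    have hpt : p (((pres p t)^[k-1] u).1) = t := by
      rw [hval]
      have h2 : p (p^[k-1] u.1) = p^[k-1+1] u.1 := (Function.iterate_succ_apply' p (k-1) u.1).symm
      rw [h2, show k - 1 + 1 = k by omega]; exact hk
    exact dif_pos hpt
  · push_neg at hex
    obtain ⟨m, hm⟩ := hp u.1
    refine ⟨m, ?_⟩
    have hval : ((pres p t)^[m] u).1 = p^[m] u.1 :=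
      pres_iter_val p t m u (fun j _ => hex j)
    have hne : p (((pres p t)^[m] u).1) ≠ t := by
      rw [hval, hm]; exact hex m
    rw [pres, dif_neg hne]
    exact Subtype.ext (by simp [hval, hm])

noncomputable def rt (p : V → V) (hp : ∀ v : V, ∃ k : ℕ, p (p^[k] v) = p^[k] v) (u : V) : V :=
  p^[Classical.choose (hp u)] u

lemma rt_fixed (p : V → V) (hp : ∀ v : V, ∃ k : ℕ, p (p^[k] v) = p^[k] v) (u : V) :
    p (rt p hp u) = rt p hp u := Classical.choose_spec (hp u)

lemma mem_desc_root_iff (p : V → V) (hp : ∀ v : V, ∃ k : ℕ, p (p^[k] v) = p^[k] v)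
    {t : V} (ht : p t = t) (u : V) : u ∈ desc p t ↔ rt p hp u = t := by
  constructor
  · rintro ⟨k, hk⟩
    set m := Classical.choose (hp u) with hm
    rcases le_total k m with hle | hle
    · have : rt p hp u = p^[m - k] (p^[k] u) := by
        rw [← Function.iterate_add_apply, show m - k + k = m by omega]; rfl
      rw [this, hk, Function.iterate_fixed ht]
    · have : p^[k] u = p^[k - m] (rt p hp u) := by
        rw [rt, ← Function.iterate_add_apply, show k - m + m = k by omega]
      rw [hk, Function.iterate_fixed (rt_fixed p hp u)] at this
      exact this.symm
  · intro h
    exact ⟨Classical.choose (hp u), h⟩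

lemma sum_roots [Fintype V] [DecidableEq V] (p : V → V)
    (hp : ∀ v : V, ∃ k : ℕ, p (p^[k] v) = p^[k] v) :
    ∑ t ∈ Finset.univ.filter (fun t => p t = t), (desc p t).ncard = Fintype.card V := by
  classical
  have h1 : (Finset.univ : Finset V).card =
      ∑ t ∈ Finset.univ.filter (fun t => p t = t),
        (Finset.univ.filter (fun u => rt p hp u = t)).card :=
    Finset.card_eq_sum_card_fiberwise (fun u _ => by
      simp only [Finset.mem_coe, Finset.mem_filter, Finset.mem_univ, true_and]
      exact rt_fixed p hp u)
  rw [← Finset.card_univ, h1]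
  apply Finset.sum_congr rfl
  intro t ht
  simp only [Finset.mem_filter, Finset.mem_univ, true_and] at ht
  have : desc p t = ↑(Finset.univ.filter (fun u => rt p hp u = t)) := by
    ext u
    simp only [Finset.coe_filter, Finset.mem_univ, true_and, Set.mem_setOf_eq]
    exact mem_desc_root_iff p hp ht u
  rw [this, Set.ncard_coe_finset]

noncomputable def dropTop {m : ℕ} (t : V) (g : V ≃ Fin (m+1)) (h0 : g t = 0) :
    {u : V // u ≠ t} ≃ Fin m where
  toFun u := (g u.1).pred (fun h => u.2 (g.injective (h.trans h0.symm)))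
  invFun i := ⟨g.symm i.succ, fun h => Fin.succ_ne_zero i (by
    rw [← h0, ← h, Equiv.apply_symm_apply])⟩
  left_inv u := by
    apply Subtype.ext
    simp [Fin.succ_pred]
  right_inv i := by
    simp [Fin.pred_succ]

noncomputable def extendG {m : ℕ} (t : V) (g' : {u : V // u ≠ t} ≃ Fin m) :
    V ≃ Fin (m+1) where
  toFun x :=
    letI : Decidable (x = t) := Classical.dec _
    if h : x = t then 0 else (g' ⟨x, h⟩).succ
  invFun i :=
    letI : Decidable (i = 0) := Classical.dec _
    if h : i = 0 then t else (g'.symm (i.pred h)).1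
  left_inv x := by
    dsimp only
    by_cases h : x = t
    · rw [dif_pos h, dif_pos rfl, h]
    · rw [dif_neg h, dif_neg (Fin.succ_ne_zero _), Fin.pred_succ, Equiv.symm_apply_apply]
  right_inv i := by
    dsimp only
    by_cases h : i = 0
    · rw [dif_pos h, dif_pos rfl, h]
    · rw [dif_neg h, dif_neg (g'.symm (i.pred h)).2, Subtype.coe_eta, Equiv.apply_symm_apply,
        Fin.succ_pred]

noncomputable def fiberEquiv {m : ℕ} (p : V → V) (t : V) (ht : p t = t) :
    {g : V ≃ Fin (m+1) // (∀ w, p w ≠ w → g (p w) < g w) ∧ g t = 0} ≃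
    {g' : {u : V // u ≠ t} ≃ Fin m //
      ∀ w, pres p t w ≠ w → g' (pres p t w) < g' w} where
  toFun x := ⟨dropTop t x.1 x.2.2, by
    rintro ⟨u, hu⟩ hw
    have hput : p u ≠ t := fun h => hw (dif_pos h)
    have hpres : pres p t ⟨u, hu⟩ = ⟨p u, hput⟩ := dif_neg hput
    have hpu : p u ≠ u := fun h => hw (by rw [hpres]; exact Subtype.ext h)
    have hlt := x.2.1 u hpu
    rw [hpres]
    simpa [dropTop, Fin.pred_lt_pred_iff] using hlt⟩
  invFun y := ⟨extendG t y.1, by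
    refine ⟨?_, dif_pos rfl⟩
    intro w hw
    have hwt : w ≠ t := fun h => hw (by rw [h, ht])
    have hgw : extendG t y.1 w = (y.1 ⟨w, hwt⟩).succ := dif_neg hwt
    by_cases hp1 : p w = t
    · have : extendG t y.1 (p w) = 0 := dif_pos hp1
      rw [this, hgw]
      exact Fin.succ_pos _
    · have hpres : pres p t ⟨w, hwt⟩ = ⟨p w, hp1⟩ := dif_neg hp1
      have hne : pres p t ⟨w, hwt⟩ ≠ ⟨w, hwt⟩ := by
        rw [hpres]; exact fun h => hw (congrArg Subtype.val h)
      have hlt := y.2 ⟨w, hwt⟩ hne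
      rw [hpres] at hlt
      have : extendG t y.1 (p w) = (y.1 ⟨p w, hp1⟩).succ := dif_neg hp1
      rw [this, hgw]
      exact Fin.succ_lt_succ_iff.mpr hlt⟩
  left_inv x := by
    apply Subtype.ext
    apply Equiv.ext
    intro w
    show extendG t (dropTop t x.1 x.2.2) w = x.1 w
    by_cases h : w = t
    · rw [show extendG t (dropTop t x.1 x.2.2) w = 0 from dif_pos h, h, x.2.2]
    · rw [show extendG t (dropTop t x.1 x.2.2) w = ((dropTop t x.1 x.2.2) ⟨w, h⟩).succ
        from dif_neg h]
      simp [dropTop]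
  right_inv y := by
    apply Subtype.ext
    apply Equiv.ext
    intro u
    have h1 : extendG t y.1 u.1 = (y.1 ⟨u.1, u.2⟩).succ := dif_neg u.2
    simp only [dropTop, Equiv.coe_fn_mk, h1, Fin.pred_succ, Subtype.coe_eta]

noncomputable def sigmaEquiv {m : ℕ} (p : V → V) :
    {g : V ≃ Fin (m+1) // ∀ w, p w ≠ w → g (p w) < g w} ≃
    Σ t : {t : V // p t = t},
      {g : V ≃ Fin (m+1) // (∀ w, p w ≠ w → g (p w) < g w) ∧ g t.1 = 0} where
  toFun x := ⟨⟨x.1.symm 0, by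
      by_contra hne
      have hlt := x.2 (x.1.symm 0) hne
      rw [Equiv.apply_symm_apply] at hlt
      exact absurd hlt (Fin.not_lt_zero _)⟩, ⟨x.1, x.2, x.1.apply_symm_apply 0⟩⟩
  invFun y := ⟨y.2.1, y.2.2.1⟩
  left_inv x := rfl
  right_inv y := by
    rcases y with ⟨⟨t, ht⟩, g, hC, h0⟩
    have h2 : g.symm 0 = t := by rw [Equiv.symm_apply_eq]; exact h0.symm
    subst h2
    rfl

lemma forest_count : ∀ (N : ℕ) (V : Type) [Fintype V] (p : V → V),
    Fintype.card V = N → (∀ v : V, ∃ k : ℕ, p (p^[k] v) = p^[k] v) →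
    Nat.card {g : V ≃ Fin N // ∀ w, p w ≠ w → g (p w) < g w} *
      ∏ v : V, (desc p v).ncard = N.factorial := by
  intro N
  induction N with
  | zero =>
    intro V _ p hcard hp
    haveI : IsEmpty V := Fintype.card_eq_zero_iff.mp hcard
    haveI : Unique {g : V ≃ Fin 0 // ∀ w, p w ≠ w → g (p w) < g w} :=
      { default := ⟨Equiv.equivOfIsEmpty V (Fin 0), fun w => (IsEmpty.false w).elim⟩
        uniq := fun x => Subtype.ext (Equiv.ext fun w => (IsEmpty.false w).elim) }
    rw [Finset.univ_eq_empty, Finset.prod_empty, Nat.card_unique]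
    rfl
  | succ m ih =>
    intro V _ p hcard hp
    classical
    have hsig : Nat.card {g : V ≃ Fin (m+1) // ∀ w, p w ≠ w → g (p w) < g w} =
        ∑ t : {t : V // p t = t},
          Nat.card {g : V ≃ Fin (m+1) // (∀ w, p w ≠ w → g (p w) < g w) ∧ g t.1 = 0} := by
      rw [Nat.card_congr (sigmaEquiv p), nat_card_sigma]
    -- per-root computation
    have hroot : ∀ t : {t : V // p t = t},
        Nat.card {g : V ≃ Fin (m+1) // (∀ w, p w ≠ w → g (p w) < g w) ∧ g t.1 = 0} *
          ∏ v ∈ Finset.univ.erase t.1, (desc p v).ncard = m.factorial := by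
      intro t
      have hcard' : Fintype.card {u : V // u ≠ t.1} = m := by
        rw [Fintype.card_subtype_compl, Fintype.card_subtype_eq, hcard]
        omega
      have hih := ih {u : V // u ≠ t.1} (pres p t.1) hcard' (pres_forest p t.1 t.2 hp)
      rw [Nat.card_congr (fiberEquiv p t.1 t.2)]
      have hfac : ∀ v' : {u : V // u ≠ t.1},
          (desc (pres p t.1) v').ncard = (desc p v'.1).ncard := fun v' => by
        rw [← desc_pres p t.1 t.2 v', Set.ncard_image_of_injective _ Subtype.val_injective]
      have hprod : ∏ v' : {u : V // u ≠ t.1}, (desc (pres p t.1) v').ncard =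
          ∏ v ∈ Finset.univ.erase t.1, (desc p v).ncard := by
        calc ∏ v' : {u : V // u ≠ t.1}, (desc (pres p t.1) v').ncard
            = ∏ v' : {u : V // u ≠ t.1}, (desc p v'.1).ncard :=
              Finset.prod_congr rfl (fun v' _ => hfac v')
          _ = ∏ v ∈ Finset.filter (fun x => x ≠ (t.1 : V)) Finset.univ, (desc p v).ncard :=
              (Finset.prod_subtype (p := fun u => u ≠ (t.1 : V))
                (Finset.filter (fun x => x ≠ (t.1 : V)) Finset.univ) (fun x => by simp)
                (fun v => (desc p v).ncard)).symm
          _ = ∏ v ∈ Finset.univ.erase t.1, (desc p v).ncard := by rw [Finset.filter_ne']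
      rw [← hprod]
      exact hih
    rw [hsig, Finset.sum_mul]
    have hterm : ∀ t : {t : V // p t = t},
        Nat.card {g : V ≃ Fin (m+1) // (∀ w, p w ≠ w → g (p w) < g w) ∧ g t.1 = 0} *
          ∏ v : V, (desc p v).ncard =
        (desc p t.1).ncard * m.factorial := by
      intro t
      rw [← Finset.mul_prod_erase Finset.univ _ (Finset.mem_univ t.1), ← mul_assoc,
        mul_comm (Nat.card _) ((desc p t.1).ncard), mul_assoc, hroot t]
    rw [Finset.sum_congr rfl (fun t _ => hterm t), ← Finset.sum_mul]
    have hsum : ∑ t : {t : V // p t = t}, (desc p t.1).ncard = m + 1 := by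
      rw [← Finset.sum_subtype (p := fun t => p t = t) (Finset.univ.filter (fun t => p t = t)) (fun x => by simp)
        (fun t => (desc p t).ncard), sum_roots p hp, hcard]
    rw [hsum, Nat.factorial_succ]

/-! ### The doubled tree -/

noncomputable def dbl (p : V → V) (r : V) : V × Bool → V × Bool :=
  fun x =>
    letI : Decidable (x.1 = r) := Classical.dec _
    if x.2 then (x.1, false) else if x.1 = r then (r, false) else (p x.1, true)

variable (p : V → V) (r : V)

lemma dbl_true (u : V) : dbl p r (u, true) = (u, false) := by
  simp [dbl]

lemma dbl_false_root : dbl p r (r, false) = (r, false) := by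
  simp [dbl]

lemma dbl_false (u : V) (hu : u ≠ r) : dbl p r (u, false) = (p u, true) := by
  simp [dbl, hu]

variable (hroot : p r = r)

include hroot in
lemma dbl_iter_even (k : ℕ) (u : V) :
    (dbl p r)^[2 * k] (u, false) = (p^[k] u, false) := by
  induction k with
  | zero => rfl
  | succ k ih =>
    have h1 : 2 * (k + 1) = 2 + 2 * k := by omega
    rw [h1, Function.iterate_add_apply, ih]
    by_cases h : p^[k] u = r
    · have h2 : p^[k+1] u = r := by
        rw [Function.iterate_succ_apply', h, hroot]
      rw [h, h2]
      show dbl p r (dbl p r (r, false)) = (r, false)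
      rw [dbl_false_root, dbl_false_root]
    · show dbl p r (dbl p r (p^[k] u, false)) = (p^[k+1] u, false)
      rw [dbl_false p r _ h, dbl_true, Function.iterate_succ_apply']

include hroot in
lemma dbl_iter_odd_root {k : ℕ} {u : V} (h : p^[k] u = r) :
    (dbl p r)^[2 * k + 1] (u, false) = (r, false) := by
  rw [show 2 * k + 1 = 1 + 2 * k by omega, Function.iterate_add_apply,
    dbl_iter_even p r hroot, Function.iterate_one, h, dbl_false_root]

include hroot in
lemma dbl_iter_odd_nonroot {k : ℕ} {u : V} (h : p^[k] u ≠ r) :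
    (dbl p r)^[2 * k + 1] (u, false) = (p^[k+1] u, true) := by
  rw [show 2 * k + 1 = 1 + 2 * k by omega, Function.iterate_add_apply,
    dbl_iter_even p r hroot, Function.iterate_one, dbl_false p r _ h,
    Function.iterate_succ_apply']

variable (hreach : ∀ v : V, ∃ k : ℕ, p^[k] v = r)

include hroot hreach in
lemma dbl_forest : ∀ x : V × Bool, ∃ k : ℕ, dbl p r ((dbl p r)^[k] x) = (dbl p r)^[k] x := by
  rintro ⟨u, b⟩
  obtain ⟨m, hm⟩ := hreach u
  cases b
  · exact ⟨2 * m, by rw [dbl_iter_even p r hroot, hm, dbl_false_root]⟩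
  · refine ⟨2 * m + 1, ?_⟩
    rw [Function.iterate_succ_apply, dbl_true, dbl_iter_even p r hroot, hm, dbl_false_root]

include hroot in
lemma no_cycle {v : V} {k : ℕ} (hv : ∃ m, p^[m] v = r) (hk : p^[k + 1] v = v) : v = r := by
  obtain ⟨m, hm⟩ := hv
  have hper : ∀ s : ℕ, p^[(k + 1) * s] v = v := by
    intro s
    induction s with
    | zero => rfl
    | succ s ih =>
      rw [Nat.mul_succ, Function.iterate_add_apply, hk, ih]
  have h1 : p^[(k + 1) * m] v = v := hper m
  have h2 : p^[(k + 1) * m] v = p^[(k + 1) * m - m] (p^[m] v) := by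
    rw [← Function.iterate_add_apply]
    congr 1
    have : m ≤ (k + 1) * m := Nat.le_mul_of_pos_left m (by omega)
    omega
  rw [hm, Function.iterate_fixed hroot] at h2
  rw [h2] at h1
  exact h1.symm

include hroot in
lemma desc_dbl_false (v : V) :
    desc (dbl p r) (v, false) = {x : V × Bool | x.1 ∈ desc p v} := by
  ext ⟨u, b⟩
  simp only [Set.mem_setOf_eq]
  constructor
  · rintro ⟨j, hj⟩
    have key : ∀ (j : ℕ) (u : V), (dbl p r)^[j] (u, false) = (v, false) → u ∈ desc p v := by
      intro j u hj
      rcases Nat.even_or_odd j with ⟨k, hk⟩ | ⟨k, hk⟩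
      · rw [show j = 2 * k by omega, dbl_iter_even p r hroot] at hj
        exact ⟨k, congrArg Prod.fst hj⟩
      · rw [show j = 2 * k + 1 by omega] at hj
        by_cases h : p^[k] u = r
        · rw [dbl_iter_odd_root p r hroot h] at hj
          exact ⟨k, by rw [h]; exact (congrArg Prod.fst hj : (r : V) = v)⟩
        · rw [dbl_iter_odd_nonroot p r hroot h] at hj
          exact absurd (congrArg Prod.snd hj) (by simp)
    cases b
    · exact key j u hj
    · rcases j with _ | j
      · exact absurd (congrArg Prod.snd hj) (by simp)
      · rw [Function.iterate_succ_apply, dbl_true] at hj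
        exact key j u hj
  · rintro ⟨k, hk⟩
    cases b
    · exact ⟨2 * k, by rw [dbl_iter_even p r hroot, hk]⟩
    · exact ⟨2 * k + 1, by
        rw [Function.iterate_succ_apply, dbl_true, dbl_iter_even p r hroot, hk]⟩

include hroot hreach in
lemma desc_dbl_true (v : V) :
    desc (dbl p r) (v, true) = {x : V × Bool | x.1 ∈ desc p v} \ {(v, false)} := by
  have hvfalse : (v, false) ∉ desc (dbl p r) (v, true) := by
    rintro ⟨j, hj⟩
    rcases Nat.even_or_odd j with ⟨k, hk⟩ | ⟨k, hk⟩
    · rw [show j = 2 * k by omega, dbl_iter_even p r hroot] at hj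
      exact absurd (congrArg Prod.snd hj) (by simp)
    · rw [show j = 2 * k + 1 by omega] at hj
      by_cases h : p^[k] v = r
      · rw [dbl_iter_odd_root p r hroot h] at hj
        exact absurd (congrArg Prod.snd hj) (by simp)
      · rw [dbl_iter_odd_nonroot p r hroot h] at hj
        have h1 : p^[k + 1] v = v := congrArg Prod.fst hj
        have h2 : v = r := no_cycle p r hroot (hreach v) h1
        exact h (h2 ▸ Function.iterate_fixed (h2 ▸ hroot) k)
  have keyfwd : ∀ (j : ℕ) (u : V), (dbl p r)^[j] (u, false) = (v, true) → u ∈ desc p v := by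
    intro j u hj
    rcases Nat.even_or_odd j with ⟨k, hk⟩ | ⟨k, hk⟩
    · rw [show j = 2 * k by omega, dbl_iter_even p r hroot] at hj
      exact absurd (congrArg Prod.snd hj) (by simp)
    · rw [show j = 2 * k + 1 by omega] at hj
      by_cases h : p^[k] u = r
      · rw [dbl_iter_odd_root p r hroot h] at hj
        exact absurd (congrArg Prod.snd hj) (by simp)
      · rw [dbl_iter_odd_nonroot p r hroot h] at hj
        exact ⟨k + 1, congrArg Prod.fst hj⟩
  have keyC : ∀ u : V, u ∈ desc p v → u ≠ v → (u, false) ∈ desc (dbl p r) (v, true) := by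
    intro u hu hne
    classical
    have hex : ∃ k, p^[k] u = v := hu
    set k := Nat.find hex with hkdef
    have hk : p^[k] u = v := Nat.find_spec hex
    have hk1 : 1 ≤ k := by
      rcases Nat.eq_zero_or_pos k with h0 | h1
      · exact absurd (by simpa [h0] using hk) hne
      · exact h1
    have hkr : p^[k - 1] u ≠ r := by
      intro habs
      have h1 : p^[k] u = r := by
        rw [show k = k - 1 + 1 by omega, Function.iterate_succ_apply', habs, hroot]
      have h2 : v = r := by rw [← hk, h1]
      have h3 : p^[k - 1] u = v := by rw [habs, h2]
      rcases Nat.eq_zero_or_pos (k - 1) with h4 | h4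
      · exact hne (by rw [← h3, h4]; rfl)
      · exact absurd h3 (Nat.find_min hex (by omega))
    refine ⟨2 * (k - 1) + 1, ?_⟩
    rw [dbl_iter_odd_nonroot p r hroot hkr, show k - 1 + 1 = k by omega, hk]
  ext ⟨u, b⟩
  simp only [Set.mem_diff, Set.mem_setOf_eq, Set.mem_singleton_iff, Prod.mk.injEq]
  constructor
  · rintro ⟨j, hj⟩
    constructor
    · cases b
      · exact keyfwd j u hj
      · rcases j with _ | j
        · exact (show u = v from congrArg Prod.fst hj) ▸ self_mem_desc p v
        · rw [Function.iterate_succ_apply, dbl_true] at hj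
          exact keyfwd j u hj
    · rintro ⟨rfl, rfl⟩
      exact hvfalse ⟨j, hj⟩
  · rintro ⟨hu, hne⟩
    cases b
    · have hne' : u ≠ v := fun h => hne ⟨h, rfl⟩
      exact keyC u hu hne'
    · by_cases h : u = v
      · exact ⟨0, by rw [h]; rfl⟩
      · obtain ⟨j, hj⟩ := keyC u hu h
        exact ⟨j + 1, by rw [Function.iterate_succ_apply, dbl_true]; exact hj⟩

lemma ncard_lift (v : V) :
    ({x : V × Bool | x.1 ∈ desc p v}).ncard = 2 * (desc p v).ncard := by
  rw [← Nat.card_coe_set_eq, ← Nat.card_coe_set_eq]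
  have e : ({x : V × Bool | x.1 ∈ desc p v} : Set (V × Bool)) ≃ (desc p v) × Bool :=
    { toFun := fun x => (⟨x.1.1, x.2⟩, x.1.2)
      invFun := fun y => ⟨(y.1.1, y.2), y.1.2⟩
      left_inv := fun x => rfl
      right_inv := fun y => rfl }
  rw [Nat.card_congr e, Nat.card_prod]
  simp [mul_comm]

include hroot in
lemma ncard_dbl_false (v : V) :
    (desc (dbl p r) (v, false)).ncard = 2 * (desc p v).ncard := by
  rw [desc_dbl_false p r hroot, ncard_lift]

include hroot hreach in
lemma ncard_dbl_true [Fintype V] (v : V) :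
    (desc (dbl p r) (v, true)).ncard = 2 * (desc p v).ncard - 1 := by
  rw [desc_dbl_true p r hroot hreach,
    Set.ncard_diff_singleton_of_mem (show (v, false) ∈ {x : V × Bool | x.1 ∈ desc p v}
      from self_mem_desc p v), ncard_lift]

lemma pair_eq {N : ℕ} {a b c d : Fin N} (hab : a < b) (hcd : c < d)
    (h : ({a, b} : Finset (Fin N)) = {c, d}) : a = c ∧ b = d := by
  have ha : a = c ∨ a = d := by
    have h1 : a ∈ ({c, d} : Finset (Fin N)) := h ▸ Finset.mem_insert_self a {b}
    simpa using h1
  have hb : b = c ∨ b = d := by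
    have h1 : b ∈ ({c, d} : Finset (Fin N)) := h ▸ (by simp : b ∈ ({a, b} : Finset (Fin N)))
    simpa using h1
  have hc : c = a ∨ c = b := by
    have h1 : c ∈ ({a, b} : Finset (Fin N)) := h.symm ▸ Finset.mem_insert_self c {d}
    simpa using h1
  simp only [Fin.ext_iff] at ha hb hc ⊢
  rw [Fin.lt_def] at hab hcd
  omega

include hroot hreach in
lemma bilab_count [Fintype V] (n : ℕ) (hn : n = Fintype.card V) :
    Nat.card {ℓ : V → Finset (Fin (2 * n)) //
        (∀ v : V, (ℓ v).card = 2) ∧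
        (∀ v w : V, v ≠ w → Disjoint (ℓ v) (ℓ w)) ∧
        (∀ x : Fin (2 * n), ∃ v : V, x ∈ ℓ v) ∧
        (∀ w : V, w ≠ r → ∀ a ∈ ℓ (p w), ∀ b ∈ ℓ w, a < b)} =
    Nat.card {g : V × Bool ≃ Fin (2 * n) //
        ∀ x, dbl p r x ≠ x → g (dbl p r x) < g x} := by
  classical
  symm
  have hlt : ∀ (g : {g : V × Bool ≃ Fin (2 * n) //
      ∀ x, dbl p r x ≠ x → g (dbl p r x) < g x}) (v : V),
      g.1 (v, false) < g.1 (v, true) := by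
    intro g v
    have hne : dbl p r (v, true) ≠ (v, true) := by
      rw [dbl_true]; simp
    have h := g.2 (v, true) hne
    rwa [dbl_true] at h
  have prop1 : ∀ g : {g : V × Bool ≃ Fin (2 * n) //
      ∀ x, dbl p r x ≠ x → g (dbl p r x) < g x},
      ∀ v : V, ({g.1 (v, false), g.1 (v, true)} : Finset (Fin (2 * n))).card = 2 := by
    intro g v
    exact Finset.card_pair (ne_of_lt (hlt g v))
  have prop2 : ∀ g : {g : V × Bool ≃ Fin (2 * n) //
      ∀ x, dbl p r x ≠ x → g (dbl p r x) < g x},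
      ∀ v w : V, v ≠ w → Disjoint ({g.1 (v, false), g.1 (v, true)} : Finset (Fin (2 * n)))
        {g.1 (w, false), g.1 (w, true)} := by
    intro g v w hvw
    rw [Finset.disjoint_left]
    intro x hx hx'
    simp only [Finset.mem_insert, Finset.mem_singleton] at hx hx'
    apply hvw
    rcases hx with hx | hx <;> rcases hx' with hx' | hx' <;>
      exact congrArg Prod.fst (g.1.injective (hx.symm.trans hx'))
  have prop3 : ∀ g : {g : V × Bool ≃ Fin (2 * n) //
      ∀ x, dbl p r x ≠ x → g (dbl p r x) < g x},
      ∀ x : Fin (2 * n), ∃ v : V, x ∈ ({g.1 (v, false), g.1 (v, true)} : Finset (Fin (2 * n))) := by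
    intro g x
    obtain ⟨⟨v, b⟩, hb⟩ : ∃ y, g.1 y = x := ⟨g.1.symm x, by simp⟩
    refine ⟨v, ?_⟩
    cases b
    · simp [← hb]
    · simp [← hb]
  have prop4 : ∀ g : {g : V × Bool ≃ Fin (2 * n) //
      ∀ x, dbl p r x ≠ x → g (dbl p r x) < g x},
      ∀ w : V, w ≠ r → ∀ a ∈ ({g.1 (p w, false), g.1 (p w, true)} : Finset (Fin (2 * n))),
        ∀ b ∈ ({g.1 (w, false), g.1 (w, true)} : Finset (Fin (2 * n))), a < b := by
    intro g w hw a ha b hb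
    have hne : dbl p r (w, false) ≠ (w, false) := by
      rw [dbl_false p r w hw]; simp
    have h1 := g.2 (w, false) hne
    rw [dbl_false p r w hw] at h1
    simp only [Finset.mem_insert, Finset.mem_singleton] at ha hb
    have ha' : a ≤ g.1 (p w, true) := by
      rcases ha with ha | ha
      · exact ha ▸ le_of_lt (hlt g (p w))
      · exact ha ▸ le_refl _
    have hb' : g.1 (w, false) ≤ b := by
      rcases hb with hb | hb
      · exact hb ▸ le_refl _
      · exact hb ▸ le_of_lt (hlt g w)
    exact lt_of_le_of_lt ha' (lt_of_lt_of_le h1 hb')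
  apply Nat.card_eq_of_bijective
    (fun g => ⟨fun v => {g.1 (v, false), g.1 (v, true)}, prop1 g, prop2 g, prop3 g, prop4 g⟩)
  constructor
  · intro g g' hgg
    have heq : ∀ v : V, ({g.1 (v, false), g.1 (v, true)} : Finset (Fin (2 * n))) =
        {g'.1 (v, false), g'.1 (v, true)} := by
      intro v
      exact congrFun (congrArg Subtype.val hgg) v
    apply Subtype.ext
    apply Equiv.ext
    rintro ⟨v, b⟩
    have hp := pair_eq (hlt g v) (hlt g' v) (heq v)
    cases b
    · exact hp.1
    · exact hp.2
  · rintro ⟨ℓ, h2, hdisj, hcov, hinc⟩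
    have hex : ∀ v : V, ∃ q : Fin (2 * n) × Fin (2 * n), q.1 < q.2 ∧ ℓ v = {q.1, q.2} := by
      intro v
      obtain ⟨a, b, hne, hab⟩ := Finset.card_eq_two.mp (h2 v)
      rcases hne.lt_or_gt with hl | hl
      · exact ⟨(a, b), hl, hab⟩
      · exact ⟨(b, a), hl, by rw [hab, Finset.pair_comm]⟩
    choose q hq1 hq2 using hex
    have hmem1 : ∀ v, (q v).1 ∈ ℓ v := fun v => by rw [hq2 v]; simp
    have hmem2 : ∀ v, (q v).2 ∈ ℓ v := fun v => by rw [hq2 v]; simp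
    set g0 : V × Bool → Fin (2 * n) := fun x => if x.2 then (q x.1).2 else (q x.1).1
      with hg0
    have hm : ∀ (v : V) (b : Bool), g0 (v, b) ∈ ℓ v := by
      rintro v (_ | _)
      · simpa [hg0] using hmem1 v
      · simpa [hg0] using hmem2 v
    have hginj : Function.Injective g0 := by
      rintro ⟨v, b⟩ ⟨w, b'⟩ hvw
      have hvweq : v = w := by
        by_contra hne
        have h1 := hm w b'
        rw [← hvw] at h1
        exact (Finset.disjoint_left.mp (hdisj v w hne) (hm v b)) h1
      subst hvweq
      cases b <;> cases b'
      · rfl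
      · exact absurd (by simpa [hg0] using hvw) (ne_of_lt (hq1 v))
      · exact absurd (by simpa [hg0] using hvw) (ne_of_gt (hq1 v))
      · rfl
    have hgsurj : Function.Surjective g0 := by
      intro x
      obtain ⟨v, hv⟩ := hcov x
      rw [hq2 v] at hv
      simp only [Finset.mem_insert, Finset.mem_singleton] at hv
      rcases hv with hv | hv
      · exact ⟨(v, false), hv.symm⟩
      · exact ⟨(v, true), hv.symm⟩
    refine ⟨⟨Equiv.ofBijective g0 ⟨hginj, hgsurj⟩, ?_⟩, ?_⟩
    · rintro ⟨v, b⟩ hx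
      cases b
      · by_cases hv : v = r
        · exact absurd (show dbl p r (v, false) = (v, false) by
            rw [hv]; exact dbl_false_root p r) hx
        · rw [dbl_false p r v hv]
          show g0 (p v, true) < g0 (v, false)
          have : (q (p v)).2 < (q v).1 := hinc v hv _ (hmem2 (p v)) _ (hmem1 v)
          simpa [hg0] using this
      · rw [dbl_true]
        show g0 (v, false) < g0 (v, true)
        simpa [hg0] using hq1 v
    · apply Subtype.ext
      funext v
      show ({g0 (v, false), g0 (v, true)} : Finset (Fin (2 * n))) = ℓ v
      rw [hq2 v]
      simp [hg0]

end Bilab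

/-- The number of increasing bilabellings of a rooted tree `T` of size `n`
(with distinguishable nodes) equals `(2n)! / ∏_v (2 h_v (2 h_v - 1))`. -/
theorem increasing_bilabellings_count
    (V : Type) [Fintype V] (r : V) (parent : V → V)
    (hroot : parent r = r)
    (hreach : ∀ v : V, ∃ k : ℕ, parent^[k] v = r)
    (n : ℕ) (hn : n = Fintype.card V)
    (h : V → ℕ) (hh : ∀ v : V, h v = Set.ncard {u : V | ∃ k : ℕ, parent^[k] u = v}) :
    (Nat.card {ℓ : V → Finset (Fin (2 * n)) //
        (∀ v : V, (ℓ v).card = 2) ∧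
        (∀ v w : V, v ≠ w → Disjoint (ℓ v) (ℓ w)) ∧
        (∀ x : Fin (2 * n), ∃ v : V, x ∈ ℓ v) ∧
        (∀ w : V, w ≠ r → ∀ a ∈ ℓ (parent w), ∀ b ∈ ℓ w, a < b)} : ℚ)
      = (Nat.factorial (2 * n) : ℚ) / ∏ v : V, ((2 * h v) * (2 * h v - 1) : ℚ) := by
  classical
  have hdesc : ∀ v : V, h v = (Bilab.desc parent v).ncard := hh
  have hdblforest := Bilab.dbl_forest parent r hroot hreach
  have hcard2 : Fintype.card (V × Bool) = 2 * n := by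
    rw [Fintype.card_prod, Fintype.card_bool, hn, Nat.mul_comm]
  have hfc := Bilab.forest_count (2 * n) (V × Bool) (Bilab.dbl parent r) hcard2 hdblforest
  have hprod : ∏ x : V × Bool, (Bilab.desc (Bilab.dbl parent r) x).ncard
      = ∏ v : V, (2 * h v) * (2 * h v - 1) := by
    rw [Fintype.prod_prod_type]
    apply Finset.prod_congr rfl
    intro v _
    rw [Fintype.prod_bool, Bilab.ncard_dbl_true parent r hroot hreach v,
      Bilab.ncard_dbl_false parent r hroot v, ← hdesc v, Nat.mul_comm]
  have hcount := Bilab.bilab_count parent r hroot hreach n hn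
  rw [hcount]
  have hpos : ∀ v : V, 1 ≤ h v := by
    intro v
    rw [hdesc v]
    have hfin : (Bilab.desc parent v).Finite := Set.toFinite _
    exact (Set.ncard_pos hfin).mpr ⟨v, Bilab.self_mem_desc parent v⟩
  have hQ : ∏ v : V, ((2 * (h v : ℚ)) * (2 * (h v : ℚ) - 1))
      = ((∏ v : V, (2 * h v) * (2 * h v - 1) : ℕ) : ℚ) := by
    rw [Nat.cast_prod]
    apply Finset.prod_congr rfl
    intro v _
    have h1 : 1 ≤ 2 * h v :=
      le_trans (hpos v) (Nat.le_mul_of_pos_left _ two_pos)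
    push_cast [Nat.cast_sub h1]
    ring
  have hPne : (∏ v : V, ((2 * (h v : ℚ)) * (2 * (h v : ℚ) - 1))) ≠ 0 := by
    rw [hQ, Nat.cast_ne_zero]
    apply Finset.prod_ne_zero_iff.mpr
    intro v _
    have h2 : 2 ≤ 2 * h v := by
      calc (2 : ℕ) = 2 * 1 := by norm_num
        _ ≤ 2 * h v := Nat.mul_le_mul_left 2 (hpos v)
    exact Nat.mul_ne_zero (Nat.pos_iff_ne_zero.mp (lt_of_lt_of_le zero_lt_two h2))
      (Nat.sub_ne_zero_of_lt (lt_of_lt_of_le one_lt_two h2))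
  rw [eq_div_iff hPne, hQ, ← Nat.cast_mul, ← hprod]
  exact Nat.cast_inj.mpr hfc
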